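/- arXiv:1012.2778 — 3 statements merged into one kernel-verified Lean document; each statement's English description precedes it below -/
import Mathlib

section
/- Let n ≥ 2, let κ, κ_3, …, κ_n be real numbers, and let S be the linear endomorphism of an n-dimensional real vector space defined on a basis (E_1, …, E_n) by S E_1 = κ E_1 + E_2, S E_2 = κ E_2, and S E_i = κ_i E_i for i ≥ 3. Set κ_1 = κ_2 = κ. Then for every k = 0, …, n the Newton transformation satisfies: P_k E_1 = (−1)^k (μ_k^{\{1\}} E_1 − μ_{k−1}^{\{1,2\}} E_2), P_k E_2 = (−1)^k μ_k^{\{1\}} E_2, and P_k E_i = (−1)^k μ_k^{\{i\}} E_i for every i ≥ 3. -/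
/-- `mu κ J k` is the `k`-th elementary symmetric function of the values `κ i`
with indices `i` outside `J`, with the conventions `mu κ J 0 = 1` and
`mu κ J k = 0` for `k < 0`. -/
noncomputable def mu {n : ℕ} (κ : Fin n → ℝ) (J : Finset (Fin n)) (k : ℤ) : ℝ :=
  if k < 0 then 0
  else ∑ T ∈ (Finset.univ \ J).powersetCard k.toNat, ∏ i ∈ T, κ i

open Polynomial in
private lemma esymm_branch {n : ℕ} (κ : Fin n → ℝ) (s : Finset (Fin n)) (i : Fin n)
    (hi : i ∈ s) (k : ℕ) :
    ∑ T ∈ s.powersetCard (k+1), ∏ j ∈ T, κ j =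
      (∑ T ∈ (s.erase i).powersetCard (k+1), ∏ j ∈ T, κ j)
      + κ i * ∑ T ∈ (s.erase i).powersetCard k, ∏ j ∈ T, κ j := by
  conv_lhs => rw [← Finset.insert_erase hi]
  rw [Finset.powersetCard_succ_insert (Finset.notMem_erase _ _), Finset.sum_union, Finset.sum_image]
  · rw [Finset.mul_sum]
    congr 1
    refine Finset.sum_congr rfl fun T hT => ?_
    rw [Finset.mem_powersetCard] at hT
    rw [Finset.prod_insert (fun h => Finset.notMem_erase i s (hT.1 h))]
  · intro T hT U hU h
    rw [Finset.mem_coe, Finset.mem_powersetCard] at hT hU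
    have hiT : i ∉ T := fun h => Finset.notMem_erase i s (hT.1 h)
    have hiU : i ∉ U := fun h => Finset.notMem_erase i s (hU.1 h)
    rwa [Finset.insert_erase_invOn.2.injOn.eq_iff hiT hiU] at h
  · rw [Finset.disjoint_right]
    intro T hT hT'
    rw [Finset.mem_image] at hT
    obtain ⟨U, hU, rfl⟩ := hT
    rw [Finset.mem_powersetCard] at hT'
    exact Finset.notMem_erase i s (hT'.1 (Finset.mem_insert_self i U))

private lemma mu_natCast {n : ℕ} (κ : Fin n → ℝ) (J : Finset (Fin n)) (k : ℕ) :
    mu κ J (k : ℤ) = ∑ T ∈ (Finset.univ \ J).powersetCard k, ∏ i ∈ T, κ i := by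
  simp [mu]

private lemma mu_branch {n : ℕ} (κ : Fin n → ℝ) (J : Finset (Fin n)) (i : Fin n)
    (hi : i ∉ J) (k : ℕ) :
    mu κ J (k : ℤ) = mu κ (insert i J) (k : ℤ) + κ i * mu κ (insert i J) ((k : ℤ) - 1) := by
  cases k with
  | zero => simp [mu]
  | succ k =>
    have h1 : ((k + 1 : ℕ) : ℤ) - 1 = (k : ℤ) := by push_cast; ring
    rw [h1, mu_natCast, mu_natCast, mu_natCast]
    have h2 : (Finset.univ \ J).erase i = Finset.univ \ insert i J := by
      ext x; simp [Finset.mem_erase, and_comm, eq_comm, Ne, not_or]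
    rw [← h2]
    exact esymm_branch κ _ i (by simp [Finset.mem_sdiff, hi]) k

/-- Newton transformations of a shape operator of type III:
`S E_1 = κ E_1 + E_2`, `S E_2 = κ E_2`, `S E_i = κ_i E_i` for `i ≥ 3`
(indices `0`, `1` and `i ≥ 2` in the `Fin n` indexing, with `κ_1 = κ_2 = κ`). -/
theorem newton_transformation_type_III
    (V : Type*) [AddCommGroup V] [Module ℝ V] [FiniteDimensional ℝ V]
    (n : ℕ) (hn : 2 ≤ n)
    (κ : Fin n → ℝ)
    (hκ : κ ⟨0, by omega⟩ = κ ⟨1, by omega⟩)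
    (E : Module.Basis (Fin n) ℝ V)
    (S : V →ₗ[ℝ] V)
    (hS0 : S (E ⟨0, by omega⟩) = κ ⟨0, by omega⟩ • E ⟨0, by omega⟩ + E ⟨1, by omega⟩)
    (hS1 : S (E ⟨1, by omega⟩) = κ ⟨0, by omega⟩ • E ⟨1, by omega⟩)
    (hSi : ∀ i : Fin n, 2 ≤ (i : ℕ) → S (E i) = κ i • E i)
    (a : ℕ → ℝ) (ha : ∀ k, a k = (LinearMap.charpoly S).coeff (n - k))
    (P : ℕ → V →ₗ[ℝ] V)
    (hP : ∀ k, P k = ∑ j ∈ Finset.range (k + 1), a (k - j) • S ^ j) :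
    ∀ k ≤ n,
      P k (E ⟨0, by omega⟩) =
          ((-1 : ℝ) ^ k * mu κ {⟨0, by omega⟩} (k : ℤ)) • E ⟨0, by omega⟩ +
          ((-1 : ℝ) ^ k * (-mu κ {⟨0, by omega⟩, ⟨1, by omega⟩} ((k : ℤ) - 1))) •
            E ⟨1, by omega⟩ ∧
      P k (E ⟨1, by omega⟩) =
          ((-1 : ℝ) ^ k * mu κ {⟨0, by omega⟩} (k : ℤ)) • E ⟨1, by omega⟩ ∧
      ∀ i : Fin n, 2 ≤ (i : ℕ) →
        P k (E i) = ((-1 : ℝ) ^ k * mu κ {i} (k : ℤ)) • E i := by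
  classical
  have e0 : Fin n := ⟨0, by omega⟩
  have hchar : LinearMap.charpoly S = ∏ i : Fin n, (Polynomial.X - Polynomial.C (κ i)) := by
    rw [← LinearMap.charpoly_toMatrix S E]
    set M := LinearMap.toMatrix E E S with hM
    have hdiag : ∀ i, M i i = κ i := by
      intro i
      rcases Nat.lt_or_ge (i : ℕ) 2 with hi | hi
      · interval_cases h : (i : ℕ)
        · have : i = ⟨0, by omega⟩ := Fin.ext h
          rw [this]
          simp [hM, LinearMap.toMatrix_apply, hS0, Finsupp.single_apply]
        · have : i = ⟨1, by omega⟩ := Fin.ext h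
          rw [this]
          simp [hM, LinearMap.toMatrix_apply, hS1, hκ, Finsupp.single_apply]
      · simp [hM, LinearMap.toMatrix_apply, hSi i hi]
    have htri : M.BlockTriangular OrderDual.toDual := by
      intro i j hij
      have hij' : (i : ℕ) < (j : ℕ) := hij
      rcases Nat.lt_or_ge (j : ℕ) 2 with hj | hj
      · interval_cases h : (j : ℕ)
        · omega
        · have hj1 : j = ⟨1, by omega⟩ := Fin.ext h
          rw [hj1]
          have hne : i ≠ (⟨1, by omega⟩ : Fin n) := fun hc => by
            simp [hc] at hij'
          simp [hM, LinearMap.toMatrix_apply, hS1, Finsupp.single_apply, hne.symm]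
      · have hne : j ≠ i := fun hc => by simp [hc] at hij'
        simp [hM, LinearMap.toMatrix_apply, hSi j hj, Finsupp.single_apply, hne]
    rw [Matrix.charpoly, Matrix.det_of_lowerTriangular _
      (Matrix.charmatrix_blockTriangular_iff.mpr htri)]
    exact Finset.prod_congr rfl fun i _ => by rw [Matrix.charmatrix_apply_eq, hdiag]
  have hcoeff : ∀ k ≤ n, a k = (-1 : ℝ) ^ k * mu κ (∅ : Finset (Fin n)) (k : ℤ) := by
    intro k hk
    rw [ha, hchar, mu_natCast]
    have h1 : ∏ i : Fin n, (Polynomial.X - Polynomial.C (κ i)) =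
        ((Finset.univ.val.map κ).map (fun t => Polynomial.X - Polynomial.C t)).prod := by
      rw [Multiset.map_map]; rfl
    have hcard : Multiset.card (Finset.univ.val.map κ) = n := by simp
    rw [h1, Multiset.prod_X_sub_C_coeff _ (by omega : n - k ≤ Multiset.card (Finset.univ.val.map κ))]
    rw [hcard, Nat.sub_sub_self hk, Finset.esymm_map_val]
    simp [Finset.sum_powersetCard]
  have hrec : ∀ (k : ℕ) (v : V), P (k + 1) v = a (k + 1) • v + S (P k v) := by
    intro k v
    rw [hP (k + 1), hP k]
    simp only [LinearMap.sum_apply, LinearMap.smul_apply, map_sum, map_smul]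
    rw [Finset.sum_range_succ']
    simp only [Nat.succ_sub_succ, Nat.sub_zero, pow_zero, Module.End.one_apply, pow_succ',
      Module.End.mul_apply]
    rw [add_comm]
  have ha1 : ∀ (k : ℕ) (i : Fin n), k + 1 ≤ n →
      a (k + 1) + ((-1 : ℝ) ^ k * mu κ {i} (k : ℤ)) * κ i
        = (-1 : ℝ) ^ (k + 1) * mu κ {i} ((k : ℕ) + 1 : ℤ) := by
    intro k i hk
    have hb := mu_branch κ ∅ i (by simp) (k + 1)
    rw [Finset.insert_empty] at hb
    have hc : (((k : ℕ) + 1 : ℕ) : ℤ) - 1 = ((k : ℕ) : ℤ) := by push_cast; ring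
    rw [hcoeff (k + 1) hk]
    push_cast at hb ⊢
    rw [hb, show ((k : ℤ) + 1 - 1) = (k : ℤ) by ring]
    ring
  intro k
  induction k with
  | zero =>
    intro _
    have ha0 : a 0 = 1 := by
      rw [hcoeff 0 (by omega)]; simp [mu]
    have hP0 : ∀ v : V, P 0 v = v := by
      intro v; rw [hP]; simp [ha0]
    refine ⟨?_, ?_, fun i _ => ?_⟩ <;> simp [hP0, mu]
  | succ k ih =>
    intro hk
    obtain ⟨ih0, ih1, ih2⟩ := ih (by omega)
    have hc : (((k : ℕ) + 1 : ℕ) : ℤ) - 1 = ((k : ℕ) : ℤ) := by push_cast; ring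
    refine ⟨?_, ?_, fun i hi => ?_⟩
    · rw [hrec, ih0, map_add, map_smul, map_smul, hS0, hS1]
      push_cast
      rw [show ((k : ℤ) + 1 - 1) = (k : ℤ) from by ring]
      have hA := ha1 k ⟨0, by omega⟩ hk
      push_cast at hA
      have hbr := mu_branch κ {⟨0, by omega⟩} ⟨1, by omega⟩ (by simp [Fin.ext_iff]) k
      rw [Finset.pair_comm] at hbr
      have hB2 : (-1 : ℝ) ^ (k + 1) *
            (-(mu κ {⟨0, by omega⟩, ⟨1, by omega⟩} ((k : ℕ) : ℤ)))
          = (-1 : ℝ) ^ k * mu κ {⟨0, by omega⟩} ((k : ℕ) : ℤ)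
            + κ ⟨0, by omega⟩ *
              ((-1 : ℝ) ^ k * (-mu κ {⟨0, by omega⟩, ⟨1, by omega⟩} (((k : ℕ) : ℤ) - 1))) := by
        rw [hbr, hκ]
        ring
      rw [← hA, hB2]
      module
    · rw [hrec, ih1, map_smul, hS1, smul_smul, ← add_smul]
      have := ha1 k ⟨0, by omega⟩ hk
      push_cast at this ⊢
      rw [this]
    · rw [hrec, ih2 i hi, map_smul, hSi i hi, smul_smul, ← add_smul]
      have := ha1 k i hk
      push_cast at this ⊢
      rw [this]
end

section
/- Let R be a linear endomorphism of a finite-dimensional real vector space whose minimal polynomial is exactly t² + a·t + b, let c ∈ {−1, +1}, and let d be a real number such that μ := d² + acd + b ≠ 0. Define S = −(1/|μ|^{1/2})·(R − cd·I). Then the minimal polynomial of S is t² − ((a + 2cd)/|μ|^{1/2})·t + (b + d² + acd)/|μ|, and its discriminant equals (a² − 4b)/|μ|. In particular, if a² − 4b ≤ 0, then S is not diagonalizable over ℝ. -/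
open Polynomial

/-- If the minimal polynomial of `R` is exactly `t² + a·t + b`, `c = ±1` and
`μ = d² + acd + b ≠ 0`, then the minimal polynomial of
`S = −(1/|μ|^{1/2})·(R − cd·I)` is
`t² − ((a + 2cd)/|μ|^{1/2})·t + (b + d² + acd)/|μ|`, its discriminant equals
`(a² − 4b)/|μ|`, and if `a² − 4b ≤ 0` then `S` is not diagonalizable over `ℝ`
(there is no basis of eigenvectors of `S`). -/
theorem minpoly_of_quadratic_shape_operator
    (V : Type*) [AddCommGroup V] [Module ℝ V] [FiniteDimensional ℝ V]
    (R : Module.End ℝ V) (a b : ℝ)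
    (hR : minpoly ℝ R = X ^ 2 + C a * X + C b)
    (c : ℝ) (hc : c = -1 ∨ c = 1)
    (d : ℝ) (μ : ℝ) (hμdef : μ = d ^ 2 + a * c * d + b) (hμ : μ ≠ 0)
    (S : Module.End ℝ V)
    (hSdef : S = -(1 / Real.sqrt |μ|) • (R - (c * d) • (1 : Module.End ℝ V))) :
    minpoly ℝ S =
        X ^ 2 - C ((a + 2 * c * d) / Real.sqrt |μ|) * X +
          C ((b + d ^ 2 + a * c * d) / |μ|) ∧
    (-((a + 2 * c * d) / Real.sqrt |μ|)) ^ 2 -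
        4 * ((b + d ^ 2 + a * c * d) / |μ|) = (a ^ 2 - 4 * b) / |μ| ∧
    (a ^ 2 - 4 * b ≤ 0 →
      ¬ ∃ E : Module.Basis (Fin (Module.finrank ℝ V)) ℝ V,
          ∀ i, ∃ t : ℝ, S (E i) = t • E i) := by
  have hμabs : (0:ℝ) < |μ| := abs_pos.mpr hμ
  set s := Real.sqrt |μ| with hsdef
  have hs2 : s ^ 2 = |μ| := Real.sq_sqrt (abs_nonneg μ)
  have hspos : 0 < s := Real.sqrt_pos.mpr hμabs
  have hsne : s ≠ 0 := ne_of_gt hspos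
  have hc2 : c * c = 1 := by rcases hc with h | h <;> rw [h] <;> ring
  set e : ℝ := (a + 2 * c * d) / s with hedef
  set f : ℝ := (b + d ^ 2 + a * c * d) / |μ| with hfdef
  set p : ℝ[X] := X ^ 2 - C e * X + C f with hpdef
  have hquaddeg : (X ^ 2 + C a * X + C b : ℝ[X]).natDegree = 2 := by compute_degree!
  have hpdeg : p.natDegree = 2 := by rw [hpdef]; compute_degree!
  have hpmon : p.Monic := by rw [hpdef]; monicity!
  -- the quadratic annihilates R
  have hRrel : R * R = -(a • R) - b • (1 : Module.End ℝ V) := by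
    have h0 := minpoly.aeval ℝ R
    rw [hR] at h0
    simp only [map_add, map_mul, aeval_X, aeval_C, map_pow,
      Algebra.algebraMap_eq_smul_one, smul_mul_assoc, one_mul, pow_two] at h0
    linear_combination (norm := module) h0
  -- nontriviality
  have hV : Nontrivial V := by
    by_contra h
    rw [not_nontrivial_iff_subsingleton] at h
    haveI : Subsingleton (Module.End ℝ V) :=
      ⟨fun x y => LinearMap.ext fun v => Subsingleton.elim _ _⟩
    have h1 : aeval R (1 : ℝ[X]) = 0 := Subsingleton.elim _ _
    have hdd := Polynomial.natDegree_le_of_dvd (minpoly.dvd ℝ R h1) one_ne_zero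
    rw [hR, hquaddeg, natDegree_one] at hdd
    omega
  -- no scalar operator can equal S
  have hnotlin : ∀ t : ℝ, S ≠ t • (1 : Module.End ℝ V) := by
    intro t hSt
    have hRval : R = (c * d - s * t) • (1 : Module.End ℝ V) := by
      have h1 : R = (c * d) • (1 : Module.End ℝ V) + (-s) • S := by
        rw [hSdef]
        match_scalars <;> field_simp <;> ring
      rw [hSt] at h1
      rw [h1]
      match_scalars
      ring
    have hann : aeval R (X - C (c * d - s * t)) = 0 := by
      rw [map_sub, aeval_X, aeval_C, hRval, Algebra.algebraMap_eq_smul_one]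
      module
    have hd := Polynomial.natDegree_le_of_dvd (minpoly.dvd ℝ R hann) (X_sub_C_ne_zero _)
    rw [hR, hquaddeg, natDegree_X_sub_C] at hd
    omega
  -- p annihilates S
  have hrel : S * S - e • S + f • (1 : Module.End ℝ V) = 0 := by
    have hTT : (R - (c*d) • (1 : Module.End ℝ V)) * (R - (c*d) • 1)
        = R*R - (2*(c*d)) • R + ((c*d)*(c*d)) • 1 := by
      simp only [mul_sub, sub_mul, smul_mul_assoc, mul_smul_comm, smul_smul, one_mul, mul_one]
      module
    rw [hSdef, smul_mul_smul_comm, hTT, hRrel]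
    match_scalars <;> simp only [hedef, hfdef, ← hs2] <;> field_simp
    · ring
    · linear_combination (-d^2) * hc2
  have hpe : (Polynomial.aeval S) p = 0 := by
    rw [hpdef]
    simp only [map_add, map_sub, map_mul, aeval_X, aeval_C, map_pow,
      Algebra.algebraMap_eq_smul_one, smul_mul_assoc, one_mul, pow_two]
    linear_combination (norm := module) hrel
  -- minpoly S = p
  have hSint : IsIntegral ℝ S := (Algebra.IsIntegral.of_finite ℝ (Module.End ℝ V)).isIntegral S
  have hqmon : (minpoly ℝ S).Monic := minpoly.monic hSint
  have hdvd : minpoly ℝ S ∣ p := minpoly.dvd ℝ S hpe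
  have hqle : (minpoly ℝ S).natDegree ≤ 2 := by
    have := Polynomial.natDegree_le_of_dvd hdvd hpmon.ne_zero
    omega
  have hqge : 2 ≤ (minpoly ℝ S).natDegree := by
    by_contra hlt
    push_neg at hlt
    interval_cases h : (minpoly ℝ S).natDegree
    · have h1 : minpoly ℝ S = 1 := hqmon.natDegree_eq_zero.mp h
      have h2 := minpoly.aeval ℝ S
      rw [h1] at h2
      simp only [map_one] at h2
      obtain ⟨v, hv⟩ := exists_ne (0 : V)
      have := congrArg (fun T : Module.End ℝ V => T v) h2
      simp at this
      exact hv this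
    · have h1 : minpoly ℝ S = X + C ((minpoly ℝ S).coeff 0) := hqmon.eq_X_add_C h
      have h2 := minpoly.aeval ℝ S
      rw [h1] at h2
      simp only [map_add, aeval_X, aeval_C, Algebra.algebraMap_eq_smul_one] at h2
      exact hnotlin (-((minpoly ℝ S).coeff 0)) (by
        rw [neg_smul]
        linear_combination (norm := module) h2)
  have hminS : minpoly ℝ S = p :=
    (Polynomial.eq_of_monic_of_dvd_of_natDegree_le hqmon hpmon hdvd (by omega)).symm
  have hde : e ^ 2 - 4 * f = (a ^ 2 - 4 * b) / |μ| := by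
    rw [hedef, hfdef, ← hs2]
    field_simp
    linear_combination 4*d^2*hc2
  refine ⟨by rw [hminS, hpdef], by rw [neg_pow]; simpa using hde, ?_⟩
  intro hdisc ⟨E, hE⟩
  have hteq : ∀ i, S (E i) = (e / 2) • E i := by
    intro i
    obtain ⟨t, ht⟩ := hE i
    have happ := congrArg (fun T : Module.End ℝ V => T (E i)) hrel
    simp only [LinearMap.sub_apply, LinearMap.add_apply, LinearMap.smul_apply,
      Module.End.mul_apply, Module.End.one_apply, LinearMap.zero_apply] at happ
    rw [ht, map_smul, ht, smul_smul] at happ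
    have hsm : (t * t - e * t + f) • E i = 0 := by
      linear_combination (norm := module) happ
    have hroot : t * t - e * t + f = 0 := by
      rcases smul_eq_zero.mp hsm with h | h
      · exact h
      · exact absurd h (E.ne_zero i)
    have hle : e ^ 2 - 4 * f ≤ 0 := by
      rw [hde]
      exact div_nonpos_of_nonpos_of_nonneg hdisc (le_of_lt hμabs)
    have h0 : 2 * t - e = 0 := by nlinarith [sq_nonneg (2 * t - e)]
    have ht2 : t = e / 2 := by linarith
    rw [ht, ht2]
  have hSeq : S = (e / 2) • (1 : Module.End ℝ V) := by
    apply E.ext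
    intro i
    simpa using hteq i
  exact hnotlin (e / 2) hSeq
end

section
/- Let S : ℝ → M_n(ℝ) be a differentiable matrix-valued function, and for each t let a_0(t) = 1, a_1(t), …, a_n(t) denote the coefficients of the characteristic polynomial det(x·I − S(t)) = Σ_{k=0}^n a_k(t) x^{n−k}, and let P_k(t) = Σ_{j=0}^k a_{k−j}(t)·S(t)^j denote the k-th Newton transformation of S(t). Then for every k = 0, …, n−1 the function a_{k+1} is differentiable and its derivative satisfies a_{k+1}'(t) = −tr(S'(t)·P_k(t)) for every t ∈ ℝ. -/
open Matrix Polynomial Finset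

lemma det_updateRow_as_sum (n : ℕ) (A : Matrix (Fin n) (Fin n) ℝ) (k : Fin n) (v : Fin n → ℝ) :
    (A.updateRow k v).det = ∑ i, v i * Matrix.adjugate A i k := by
  have hv : v = ∑ i, v i • (Pi.single i 1 : Fin n → ℝ) := by
    ext j; simp [Pi.single_apply, eq_comm]
  have h2 : Matrix.cramer Aᵀ v = ∑ i, v i • Matrix.cramer Aᵀ (Pi.single i 1) := by
    conv_lhs => rw [hv]
    rw [map_sum (Matrix.cramer Aᵀ)]
    exact Finset.sum_congr rfl fun i _ => (Matrix.cramer Aᵀ).map_smul _ _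
  rw [← Matrix.cramer_transpose_apply, h2]
  rw [Finset.sum_apply]
  refine Finset.sum_congr rfl fun i _ => ?_
  rw [Pi.smul_apply, Matrix.adjugate_def]
  simp

lemma sum_det_updateRow_eq (n : ℕ) (A B : Matrix (Fin n) (Fin n) ℝ) :
    ∑ k, ((A.updateRow k (B k)).det) = (Matrix.adjugate A * B).trace := by
  rw [Matrix.trace_mul_comm, Matrix.trace]
  refine Finset.sum_congr rfl fun k _ => ?_
  rw [det_updateRow_as_sum, Matrix.diag_apply, Matrix.mul_apply]

lemma jacobi (n : ℕ) (M : ℝ → Matrix (Fin n) (Fin n) ℝ) (t : ℝ)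
    (N : Matrix (Fin n) (Fin n) ℝ)
    (hM : ∀ i j, HasDerivAt (fun s => M s i j) (N i j) t) :
    HasDerivAt (fun s => (M s).det) ((Matrix.adjugate (M t) * N).trace) t := by
  rw [← sum_det_updateRow_eq]
  have h1 : ∀ σ : Equiv.Perm (Fin n),
      HasDerivAt (fun s => ∏ i, M s (σ i) i)
        (∑ j, (∏ i ∈ Finset.univ.erase j, M t (σ i) i) • N (σ j) j) t :=
    fun σ => HasDerivAt.fun_finsetProd (fun i _ => hM (σ i) i)
  have h2 : HasDerivAt (fun s => (M s).det)
      (∑ σ : Equiv.Perm (Fin n), (Equiv.Perm.sign σ : ℤ) •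
        ∑ j, (∏ i ∈ Finset.univ.erase j, M t (σ i) i) • N (σ j) j) t := by
    have h3 : (fun s => (M s).det)
        = fun s => ∑ σ : Equiv.Perm (Fin n), (Equiv.Perm.sign σ : ℤ) • ∏ i, M s (σ i) i := by
      funext s; rw [Matrix.det_apply]; simp only [Units.smul_def]
    rw [h3]
    exact HasDerivAt.fun_sum (fun σ _ => (h1 σ).const_smul ((Equiv.Perm.sign σ : ℤ)))
  convert h2 using 1
  have h4 : ∀ k, ((M t).updateRow k (N k)).det
      = ∑ σ : Equiv.Perm (Fin n), (Equiv.Perm.sign σ : ℤ) • ∏ i, ((M t).updateRow k (N k)) (σ i) i :=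
    fun k => by rw [Matrix.det_apply]; simp only [Units.smul_def]
  simp only [h4]
  rw [Finset.sum_comm]
  refine Finset.sum_congr rfl fun σ _ => ?_
  rw [← Finset.smul_sum]
  congr 1
  have key : ∑ k, ∏ i, ((M t).updateRow k (N k)) (σ i) i
      = ∑ j, (∏ i ∈ Finset.univ.erase j, M t (σ i) i) * N (σ j) j := by
    rw [← Equiv.sum_comp σ]
    refine Finset.sum_congr rfl fun j _ => ?_
    rw [← Finset.mul_prod_erase Finset.univ _ (Finset.mem_univ j)]
    rw [Matrix.updateRow_apply, if_pos rfl, mul_comm]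
    congr 1
    refine Finset.prod_congr rfl fun i hi => ?_
    rw [Matrix.updateRow_apply, if_neg]
    exact fun h => (Finset.mem_erase.mp hi).1 (σ.injective h)
  rw [key]
  rfl

variable {n : ℕ}

lemma smul_one_map_C (c : ℝ) :
    (c • (1 : Matrix (Fin n) (Fin n) ℝ)).map (C : ℝ →+* ℝ[X])
      = C c • (1 : Matrix (Fin n) (Fin n) ℝ[X]) := by
  ext i j
  simp [Matrix.map_apply, Matrix.one_apply, apply_ite C]

lemma scalar_X_mul (M : Matrix (Fin n) (Fin n) ℝ[X]) :
    Matrix.scalar (Fin n) (X : ℝ[X]) * M = (X : ℝ[X]) • M := by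
  ext i j
  simp [Matrix.scalar_apply, Matrix.diagonal_mul]

lemma faddeev (A : Matrix (Fin n) (Fin n) ℝ) :
    Matrix.adjugate (Matrix.charmatrix A)
      = ∑ m ∈ Finset.range n, (X : ℝ[X])^(n-1-m) •
          ((∑ j ∈ Finset.range (m+1), A.charpoly.coeff (n-(m-j)) • A^j).map C) := by
  set P : ℕ → Matrix (Fin n) (Fin n) ℝ :=
    fun m => ∑ j ∈ Finset.range (m+1), A.charpoly.coeff (n-(m-j)) • A^j with hPdef
  set Q : Matrix (Fin n) (Fin n) ℝ[X] :=
    ∑ m ∈ Finset.range n, (X : ℝ[X])^(n-1-m) • ((P m).map C) with hQdef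
  have hdeg : A.charpoly.natDegree = n := by simpa using A.charpoly_natDegree_eq_dim
  have ha0 : A.charpoly.coeff n = 1 := by
    have h := A.charpoly_monic.coeff_natDegree
    rwa [hdeg] at h
  have hP0 : P 0 = 1 := by
    simp [hPdef, Finset.sum_range_one, ha0]
  have hPrec : ∀ m, P (m+1) = A * P m + A.charpoly.coeff (n-(m+1)) • 1 := by
    intro m
    have h2 : A * P m = ∑ j ∈ Finset.range (m+1), A.charpoly.coeff (n-(m-j)) • A^(j+1) := by
      rw [hPdef]
      simp only [Finset.mul_sum]
      exact Finset.sum_congr rfl fun j _ => by rw [mul_smul_comm, pow_succ']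
    rw [h2, hPdef]
    simp only
    rw [Finset.sum_range_succ']
    simp
  have hPn : P n = 0 := by
    have h := Matrix.aeval_self_charpoly A
    rw [aeval_eq_sum_range, hdeg] at h
    rw [← h, hPdef]
    refine Finset.sum_congr rfl fun j hj => ?_
    have hj' : n - (n - j) = j := by
      have := Finset.mem_range.mp hj; omega
    rw [hj']
  set T : ℕ → Matrix (Fin n) (Fin n) ℝ[X] :=
    fun m => (X : ℝ[X])^(n-m) • ((P m).map C) with hTdef
  have h1 : Matrix.charmatrix A * Q = A.charpoly • (1 : Matrix (Fin n) (Fin n) ℝ[X]) := by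
    have hterm : ∀ m ∈ Finset.range n,
        Matrix.charmatrix A * ((X : ℝ[X])^(n-1-m) • ((P m).map C))
          = (T m - T (m+1))
            + ((X : ℝ[X])^(n-1-m) * C (A.charpoly.coeff (n-(m+1)))) • 1 := by
      intro m hm
      have hmn : m < n := Finset.mem_range.mp hm
      have e2 : Matrix.charmatrix A * ((P m).map C)
          = (X : ℝ[X]) • ((P m).map C) - (A * P m).map C := by
        rw [Matrix.charmatrix, sub_mul, scalar_X_mul]
        congr 1
        rw [show ((P m).map (C : ℝ →+* ℝ[X]) : Matrix (Fin n) (Fin n) ℝ[X])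
              = (C : ℝ →+* ℝ[X]).mapMatrix (P m) from rfl,
            show ((A * P m).map (C : ℝ →+* ℝ[X]) : Matrix (Fin n) (Fin n) ℝ[X])
              = (C : ℝ →+* ℝ[X]).mapMatrix (A * P m) from rfl]
        exact (_root_.map_mul (RingHom.mapMatrix (C : ℝ →+* ℝ[X])) A (P m)).symm
      have e3 : (A * P m).map (C : ℝ →+* ℝ[X])
          = (P (m+1)).map C - C (A.charpoly.coeff (n-(m+1))) • 1 := by
        have : A * P m = P (m+1) - A.charpoly.coeff (n-(m+1)) • 1 := by
          rw [hPrec m]; abel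
        rw [this, Matrix.map_sub _ (fun a b => map_sub C a b), smul_one_map_C]
      rw [mul_smul_comm, e2, e3]
      have hexp : n - 1 - m + 1 = n - m := by omega
      have hexp2 : n - (m+1) = n - 1 - m := by omega
      rw [smul_sub, smul_sub, smul_smul, ← pow_succ, hexp, smul_smul, hTdef]
      simp only [hexp2]
      abel
    rw [hQdef, Finset.mul_sum, Finset.sum_congr rfl hterm, Finset.sum_add_distrib,
      Finset.sum_range_sub', ← Finset.sum_smul]
    have hTn : T n = 0 := by
      rw [hTdef]; simp only [hPn]
      rw [Matrix.map_zero _ (map_zero C)]; simp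
    have hT0 : T 0 = (X : ℝ[X])^n • (1 : Matrix (Fin n) (Fin n) ℝ[X]) := by
      rw [hTdef]; simp only [hP0, Nat.sub_zero]
      rw [Matrix.map_one _ (map_zero C) (map_one C)]
    rw [hTn, hT0, sub_zero, ← add_smul]
    congr 1
    conv_rhs => rw [A.charpoly.as_sum_range' (n+1) (by omega), Finset.sum_range_succ,
      ← Finset.sum_range_reflect (fun i => monomial i (A.charpoly.coeff i)) n]
    rw [add_comm]
    congr 1
    · refine Finset.sum_congr rfl fun m hm => ?_
      have h1 : n - (m+1) = n - 1 - m := by omega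
      rw [h1, mul_comm, C_mul_X_pow_eq_monomial]
    · rw [ha0]
      exact X_pow_eq_monomial n
  have h2 : Matrix.charmatrix A * Matrix.adjugate (Matrix.charmatrix A)
      = A.charpoly • (1 : Matrix (Fin n) (Fin n) ℝ[X]) := by
    rw [Matrix.mul_adjugate, Matrix.charpoly]
  have h3 : A.charpoly • (Matrix.adjugate (Matrix.charmatrix A) - Q) = 0 := by
    calc A.charpoly • (Matrix.adjugate (Matrix.charmatrix A) - Q)
        = (A.charpoly • (1 : Matrix (Fin n) (Fin n) ℝ[X]))
            * (Matrix.adjugate (Matrix.charmatrix A) - Q) := by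
          rw [smul_mul_assoc, one_mul]
      _ = (Matrix.adjugate (Matrix.charmatrix A) * Matrix.charmatrix A)
            * (Matrix.adjugate (Matrix.charmatrix A) - Q) := by
          rw [Matrix.adjugate_mul, Matrix.charpoly]
      _ = Matrix.adjugate (Matrix.charmatrix A)
            * (Matrix.charmatrix A * (Matrix.adjugate (Matrix.charmatrix A) - Q)) := by
          rw [mul_assoc]
      _ = 0 := by rw [mul_sub, h2, h1, sub_self, mul_zero]
  have h4 : ∀ i j, Matrix.adjugate (Matrix.charmatrix A) i j = Q i j := by
    intro i j
    have h5 := congrFun (congrFun h3 i) j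
    rw [Matrix.smul_apply, Matrix.sub_apply, smul_eq_mul, Matrix.zero_apply] at h5
    rcases mul_eq_zero.mp h5 with h6 | h6
    · exact absurd h6 A.charpoly_monic.ne_zero
    · exact sub_eq_zero.mp h6
  rw [Matrix.ext h4, hQdef]

variable {n : ℕ}

lemma charmatrix_eval (A : Matrix (Fin n) (Fin n) ℝ) (x : ℝ) :
    (evalRingHom x).mapMatrix (Matrix.charmatrix A)
      = x • (1 : Matrix (Fin n) (Fin n) ℝ) - A := by
  ext i j
  by_cases h : i = j
  · subst h
    simp [Matrix.charmatrix_apply_eq, Matrix.one_apply]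
  · simp [Matrix.charmatrix_apply_ne _ _ _ h, Matrix.one_apply, h]

lemma det_smul_one_sub (A : Matrix (Fin n) (Fin n) ℝ) (x : ℝ) :
    (x • (1 : Matrix (Fin n) (Fin n) ℝ) - A).det = A.charpoly.eval x := by
  rw [← charmatrix_eval, ← RingHom.map_det, Matrix.charpoly]
  rfl

lemma adjugate_smul_one_sub (A : Matrix (Fin n) (Fin n) ℝ) (x : ℝ) :
    Matrix.adjugate (x • (1 : Matrix (Fin n) (Fin n) ℝ) - A)
      = ∑ m ∈ Finset.range n, x^(n-1-m) •
          (∑ j ∈ Finset.range (m+1), A.charpoly.coeff (n-(m-j)) • A^j) := by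
  rw [← charmatrix_eval, ← RingHom.map_adjugate, faddeev]
  ext i j
  simp [RingHom.mapMatrix_apply, Matrix.map_apply, Matrix.sum_apply, Matrix.smul_apply,
    smul_eq_mul, eval_finset_sum]

lemma coeff_eq_interp (N : ℕ) (f : ℝ[X]) (hf : f.degree < ((N+1 : ℕ) : WithBot ℕ)) (d : ℕ) :
    f.coeff d = ∑ i ∈ Finset.range (N+1), f.eval (i:ℝ) *
      (Lagrange.basis (Finset.range (N+1)) (fun j : ℕ => (j:ℝ)) i).coeff d := by
  have hinj : Set.InjOn (fun j : ℕ => (j:ℝ)) (Finset.range (N+1) : Finset ℕ) :=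
    fun p _ q _ h => Nat.cast_injective h
  have h := Lagrange.eq_interpolate hinj (by rwa [Finset.card_range])
  conv_lhs => rw [h]
  rw [Lagrange.interpolate_apply, Polynomial.finset_sum_coeff]
  exact Finset.sum_congr rfl fun i _ => by rw [coeff_C_mul]


/-- If `S : ℝ → M_n(ℝ)` is differentiable, `a_k(t)` are the coefficients of the
characteristic polynomial `det(x·I − S(t)) = Σ_{k=0}^n a_k(t) x^{n−k}` and
`P_k(t) = Σ_{j=0}^k a_{k−j}(t)·S(t)^j` are the Newton transformations, then for
`k = 0, …, n−1` the function `a_{k+1}` is differentiable with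
`a_{k+1}'(t) = −tr(S'(t)·P_k(t))`. -/
theorem deriv_charpoly_coeff_eq_neg_trace
    (n : ℕ) (S : ℝ → Matrix (Fin n) (Fin n) ℝ)
    (hS : ∀ i j, Differentiable ℝ fun t => S t i j)
    (a : ℝ → ℕ → ℝ) (ha : ∀ t k, a t k = (Matrix.charpoly (S t)).coeff (n - k))
    (P : ℝ → ℕ → Matrix (Fin n) (Fin n) ℝ)
    (hP : ∀ t k, P t k = ∑ j ∈ Finset.range (k + 1), a t (k - j) • S t ^ j) :
    ∀ k < n,
      Differentiable ℝ (fun t => a t (k + 1)) ∧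
      ∀ t : ℝ, deriv (fun s => a s (k + 1)) t =
        - Matrix.trace ((Matrix.of fun i j => deriv (fun s => S s i j) t) * P t k) := by
  intro k hk
  have hPm : ∀ t m, P t m
      = ∑ j ∈ Finset.range (m+1), (S t).charpoly.coeff (n-(m-j)) • (S t)^j := by
    intro t m
    rw [hP]
    exact Finset.sum_congr rfl fun j _ => by rw [ha]
  set c : ℕ → ℝ :=
    fun i => (Lagrange.basis (Finset.range (n+1)) (fun j : ℕ => (j:ℝ)) i).coeff (n-(k+1))
    with hc
  have hdelta : ∀ m < n, ∑ i ∈ Finset.range (n+1), (i:ℝ)^(n-1-m) * c i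
      = if m = k then 1 else 0 := by
    intro m hm
    have hdeg : ((X : ℝ[X])^(n-1-m)).degree < ((n+1 : ℕ) : WithBot ℕ) := by
      rw [degree_X_pow]
      exact_mod_cast (by omega : n-1-m < n+1)
    have h := coeff_eq_interp n ((X : ℝ[X])^(n-1-m)) hdeg (n-(k+1))
    rw [coeff_X_pow] at h
    have h2 : ∑ i ∈ Finset.range (n+1), (i:ℝ)^(n-1-m) * c i
        = if n-(k+1) = n-1-m then (1:ℝ) else 0 := by
      rw [h]
      exact Finset.sum_congr rfl fun i _ => by rw [eval_pow, eval_X]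
    rw [h2]
    by_cases hmk : m = k
    · subst hmk; rw [if_pos (by omega), if_pos rfl]
    · rw [if_neg (by omega), if_neg hmk]
  have key : ∀ t, HasDerivAt (fun s => a s (k+1))
      (- Matrix.trace ((Matrix.of fun i j => deriv (fun s => S s i j) t) * P t k)) t := by
    intro t
    set A' : Matrix (Fin n) (Fin n) ℝ := Matrix.of fun i j => deriv (fun s => S s i j) t
      with hA'
    have hgd : ∀ i : ℕ,
        HasDerivAt (fun s => ((i:ℝ) • (1 : Matrix (Fin n) (Fin n) ℝ) - S s).det)
          ((Matrix.adjugate ((i:ℝ) • (1 : Matrix (Fin n) (Fin n) ℝ) - S t) * (-A')).trace) t := by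
      intro i
      apply jacobi
      intro p q
      have h := ((hS p q) t).hasDerivAt
      have h2 : HasDerivAt (fun s => ((i:ℝ) • (1 : Matrix (Fin n) (Fin n) ℝ)) p q - S s p q)
          (-(A' p q)) t := by
        have := h.const_sub (((i:ℝ) • (1 : Matrix (Fin n) (Fin n) ℝ)) p q)
        simpa [hA'] using this
      simpa using h2
    have hrepr : (fun s => a s (k+1))
        = fun s => ∑ i ∈ Finset.range (n+1),
            ((i:ℝ) • (1 : Matrix (Fin n) (Fin n) ℝ) - S s).det * c i := by
      funext s
      rw [ha]
      have hdeg : (S s).charpoly.degree < ((n+1 : ℕ) : WithBot ℕ) := by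
        rw [Matrix.charpoly_degree_eq_dim, Fintype.card_fin]
        exact_mod_cast Nat.lt_succ_self n
      rw [coeff_eq_interp n _ hdeg (n-(k+1))]
      exact Finset.sum_congr rfl fun i _ => by rw [det_smul_one_sub]
    have hD : HasDerivAt
        (fun s => ∑ i ∈ Finset.range (n+1),
          ((i:ℝ) • (1 : Matrix (Fin n) (Fin n) ℝ) - S s).det * c i)
        (∑ i ∈ Finset.range (n+1),
          (Matrix.adjugate ((i:ℝ) • (1 : Matrix (Fin n) (Fin n) ℝ) - S t) * (-A')).trace * c i)
        t := HasDerivAt.fun_sum fun i _ => (hgd i).mul_const (c i)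
    have step1 : ∀ i : ℕ,
        (Matrix.adjugate ((i:ℝ) • (1 : Matrix (Fin n) (Fin n) ℝ) - S t) * (-A')).trace
          = ∑ m ∈ Finset.range n, (i:ℝ)^(n-1-m) * (P t m * (-A')).trace := by
      intro i
      rw [adjugate_smul_one_sub, Finset.sum_mul, Matrix.trace_sum]
      refine Finset.sum_congr rfl fun m _ => ?_
      rw [← hPm t m, smul_mul_assoc, Matrix.trace_smul, smul_eq_mul]
    have hDval : (∑ i ∈ Finset.range (n+1),
        (Matrix.adjugate ((i:ℝ) • (1 : Matrix (Fin n) (Fin n) ℝ) - S t) * (-A')).trace * c i)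
        = - Matrix.trace (A' * P t k) := by
      calc ∑ i ∈ Finset.range (n+1),
            (Matrix.adjugate ((i:ℝ) • (1 : Matrix (Fin n) (Fin n) ℝ) - S t) * (-A')).trace * c i
          = ∑ i ∈ Finset.range (n+1), ∑ m ∈ Finset.range n,
              ((i:ℝ)^(n-1-m) * c i) * (P t m * (-A')).trace := by
            refine Finset.sum_congr rfl fun i _ => ?_
            rw [step1, Finset.sum_mul]
            exact Finset.sum_congr rfl fun m _ => by ring
        _ = ∑ m ∈ Finset.range n, ∑ i ∈ Finset.range (n+1),
              ((i:ℝ)^(n-1-m) * c i) * (P t m * (-A')).trace := Finset.sum_comm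
        _ = ∑ m ∈ Finset.range n,
              (if m = k then (1:ℝ) else 0) * (P t m * (-A')).trace := by
            refine Finset.sum_congr rfl fun m hm => ?_
            rw [← Finset.sum_mul, hdelta m (Finset.mem_range.mp hm)]
        _ = (P t k * (-A')).trace := by
            simp only [ite_mul, one_mul, zero_mul]
            rw [Finset.sum_ite_eq' (Finset.range n) k
              (fun m => (P t m * (-A')).trace), if_pos (Finset.mem_range.mpr hk)]
        _ = - Matrix.trace (A' * P t k) := by
            rw [mul_neg, Matrix.trace_neg, Matrix.trace_mul_comm]
    rw [hrepr, ← hDval]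
    exact hD
  exact ⟨fun t => (key t).differentiableAt, fun t => (key t).deriv⟩
end
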